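/- If p ≥ 2 and d₁, d₂ are elements of a noncommutative L^p-space (or, as a special case, p-Schatten-class operators), then ‖(d₁*d₁ + d₂*d₂)^(1/2)‖_p ≤ (‖d₁‖_p² + ‖d₂‖_p²)^(1/2). -/

import Mathlib

open scoped BigOperators ComplexOrder

open Matrix Finset

section Aux

variable {n : Type*} [Fintype n] [DecidableEq n]

lemma trace_conj_eq (V N : Matrix n n ℂ) (hV : V ∈ Matrix.unitaryGroup n ℂ) :
    Matrix.trace (V * N * star V) = Matrix.trace N := by
  rw [Matrix.trace_mul_comm, ← Matrix.mul_assoc,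
    Matrix.mem_unitaryGroup_iff'.mp hV, Matrix.one_mul]

lemma trace_diag_form (M : Matrix n n ℂ) (a b : n → ℝ) :
    Matrix.trace (Matrix.diagonal (Complex.ofReal ∘ a) *
      (M * (Matrix.diagonal (Complex.ofReal ∘ b) * star M))) =
    ((∑ i, ∑ j, a i * b j * Complex.normSq (M i j) : ℝ) : ℂ) := by
  simp only [Matrix.trace, Matrix.diag_apply, Matrix.mul_apply, Matrix.diagonal_apply,
    Matrix.star_apply, Function.comp_apply, ite_mul, zero_mul, mul_ite, mul_zero,
    Finset.sum_ite_eq, Finset.mem_univ, if_true]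
  push_cast
  refine Finset.sum_congr rfl fun i _ => ?_
  rw [Finset.mul_sum]
  refine Finset.sum_congr rfl fun j _ => ?_
  have : (starRingEnd ℂ) (M i j) * M i j = (Complex.normSq (M i j) : ℂ) := by
    rw [mul_comm, Complex.mul_conj]
  rw [Complex.star_def, ← this]
  ring

lemma sum_eigenvalues_eq_trace {A : Matrix n n ℂ} (hA : A.IsHermitian) :
    ((∑ i, hA.eigenvalues i : ℝ) : ℂ) = Matrix.trace A := by
  conv_rhs => rw [hA.spectral_theorem, Unitary.conjStarAlgAut_apply]
  rw [trace_conj_eq _ _ (hA.eigenvectorUnitary).2, Matrix.trace_diagonal]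
  push_cast
  rfl

/-- Row sums of squared moduli of a unitary matrix are 1. -/
lemma unitary_row_sum {M : Matrix n n ℂ} (hM : M ∈ Matrix.unitaryGroup n ℂ) (i : n) :
    ∑ j, Complex.normSq (M i j) = 1 := by
  have h := Matrix.mem_unitaryGroup_iff.mp hM
  have h2 := congrFun (congrFun h i) i
  rw [Matrix.mul_apply] at h2
  simp only [Matrix.star_apply, Matrix.conjTranspose_apply, Complex.star_def,
    Complex.mul_conj, Matrix.one_apply_eq] at h2
  exact_mod_cast (by push_cast at h2 ⊢; exact h2 : ((∑ j, Complex.normSq (M i j) : ℝ) : ℂ) = 1)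

lemma unitary_col_sum {M : Matrix n n ℂ} (hM : M ∈ Matrix.unitaryGroup n ℂ) (j : n) :
    ∑ i, Complex.normSq (M i j) = 1 := by
  have h := Matrix.mem_unitaryGroup_iff'.mp hM
  have h2 := congrFun (congrFun h j) j
  rw [Matrix.mul_apply] at h2
  simp only [Matrix.star_apply, Matrix.conjTranspose_apply, Complex.star_def,
    Matrix.one_apply_eq] at h2
  have h3 : ∀ z : ℂ, (starRingEnd ℂ) z * z = (Complex.normSq z : ℂ) := fun z => by
    rw [mul_comm, Complex.mul_conj]
  simp only [h3] at h2
  exact_mod_cast (by push_cast at h2 ⊢; exact h2 : ((∑ i, Complex.normSq (M i j) : ℝ) : ℂ) = 1)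

/-- Trace of the product of two "spectrally presented" matrices. -/
lemma trace_prod_eq (V W : Matrix n n ℂ) (hV : V ∈ Matrix.unitaryGroup n ℂ)
    (a b : n → ℝ) :
    Matrix.trace ((V * Matrix.diagonal (Complex.ofReal ∘ a) * star V) *
        (W * Matrix.diagonal (Complex.ofReal ∘ b) * star W)) =
      ((∑ i, ∑ j, a i * b j * Complex.normSq ((star V * W) i j) : ℝ) : ℂ) := by
  have hsV : star V * V = 1 := Matrix.mem_unitaryGroup_iff'.mp hV
  have key : (V * Matrix.diagonal (Complex.ofReal ∘ a) * star V) *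
        (W * Matrix.diagonal (Complex.ofReal ∘ b) * star W) =
      V * (Matrix.diagonal (Complex.ofReal ∘ a) *
        ((star V * W) * (Matrix.diagonal (Complex.ofReal ∘ b) * star (star V * W)))) * star V := by
    simp only [Matrix.star_mul, star_star, Matrix.mul_assoc]
    rw [Matrix.mem_unitaryGroup_iff.mp hV, Matrix.mul_one]
  rw [key, trace_conj_eq _ _ hV, trace_diag_form]

lemma double_sum_holder {q q' : ℝ} (hq : q.HolderConjugate q')
    (t : n → n → ℝ) (ht : ∀ i j, 0 ≤ t i j)
    (hrow : ∀ i, ∑ j, t i j = 1) (hcol : ∀ j, ∑ i, t i j = 1)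
    (a b : n → ℝ) (ha : ∀ i, 0 ≤ a i) (hb : ∀ i, 0 ≤ b i) :
    ∑ i, ∑ j, a i * b j * t i j ≤
      (∑ i, a i ^ q) ^ (1/q) * (∑ j, b j ^ q') ^ (1/q') := by
  have key := Real.inner_le_Lp_mul_Lq (Finset.univ : Finset (n × n))
    (fun x => a x.1 * t x.1 x.2 ^ (1/q)) (fun x => b x.2 * t x.1 x.2 ^ (1/q')) hq
  have hsum : 1/q + 1/q' = 1 := by
    rw [one_div, one_div]; exact hq.inv_add_inv_eq_one
  have e1 : ∀ x : n × n, (a x.1 * t x.1 x.2 ^ (1/q)) * (b x.2 * t x.1 x.2 ^ (1/q')) =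
      a x.1 * b x.2 * t x.1 x.2 := by
    intro x
    have : t x.1 x.2 ^ (1/q) * t x.1 x.2 ^ (1/q') = t x.1 x.2 := by
      rw [← Real.rpow_add' (ht x.1 x.2) (by rw [hsum]; norm_num), hsum, Real.rpow_one]
    calc (a x.1 * t x.1 x.2 ^ (1/q)) * (b x.2 * t x.1 x.2 ^ (1/q'))
        = a x.1 * b x.2 * (t x.1 x.2 ^ (1/q) * t x.1 x.2 ^ (1/q')) := by ring
      _ = a x.1 * b x.2 * t x.1 x.2 := by rw [this]
  have e3 : ∀ x : n × n, |b x.2 * t x.1 x.2 ^ (1/q')| ^ q' = b x.2 ^ q' * t x.1 x.2 := by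
    intro x
    rw [abs_of_nonneg (mul_nonneg (hb _) (Real.rpow_nonneg (ht _ _) _)),
      Real.mul_rpow (hb _) (Real.rpow_nonneg (ht _ _) _),
      ← Real.rpow_mul (ht _ _), one_div, inv_mul_cancel₀ hq.symm.ne_zero, Real.rpow_one]
  have e2 : ∀ x : n × n, |a x.1 * t x.1 x.2 ^ (1/q)| ^ q = a x.1 ^ q * t x.1 x.2 := by
    intro x
    rw [abs_of_nonneg (mul_nonneg (ha _) (Real.rpow_nonneg (ht _ _) _)),
      Real.mul_rpow (ha _) (Real.rpow_nonneg (ht _ _) _),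
      ← Real.rpow_mul (ht _ _), one_div, inv_mul_cancel₀ hq.ne_zero, Real.rpow_one]
  simp only [e1, e2, e3] at key
  simp only [Fintype.sum_prod_type] at key
  have r1 : ∑ i, ∑ j, a i ^ q * t i j = ∑ i, a i ^ q := by
    refine Finset.sum_congr rfl fun i _ => ?_
    rw [← Finset.mul_sum, hrow i, mul_one]
  have r2 : ∑ i, ∑ j, b j ^ q' * t i j = ∑ j, b j ^ q' := by
    rw [Finset.sum_comm]
    refine Finset.sum_congr rfl fun j _ => ?_
    rw [← Finset.mul_sum, hcol j, mul_one]
  rw [r1, r2] at key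
  exact key

lemma core_triangle {A B : Matrix n n ℂ} (hA : A.PosSemidef) (hB : B.PosSemidef)
    {q : ℝ} (hq : 1 ≤ q) :
    (∑ i, ((hA.add hB).1.eigenvalues i) ^ q) ^ (1/q) ≤
      (∑ i, (hA.1.eigenvalues i) ^ q) ^ (1/q) +
        (∑ i, (hB.1.eigenvalues i) ^ q) ^ (1/q) := by
  rcases eq_or_lt_of_le hq with hq1 | hq1
  · -- q = 1 : equality of traces
    subst hq1
    simp only [show (1:ℝ)/1 = 1 from by norm_num, Real.rpow_one]
    have h1 := sum_eigenvalues_eq_trace (hA.add hB).1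
    rw [Matrix.trace_add, ← sum_eigenvalues_eq_trace hA.1, ← sum_eigenvalues_eq_trace hB.1] at h1
    exact le_of_eq (by exact_mod_cast h1)
  · -- 1 < q : duality argument
    have hq' : q.HolderConjugate (q/(q-1)) := Real.HolderConjugate.conjExponent hq1
    set q' : ℝ := q/(q-1) with hq'def
    have hsum : 1/q + 1/q' = 1 := by rw [one_div, one_div]; exact hq'.inv_add_inv_eq_one
    set μ : n → ℝ := (hA.add hB).1.eigenvalues with hμdef
    set α : n → ℝ := hA.1.eigenvalues with hαdef
    set β : n → ℝ := hB.1.eigenvalues with hβdef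
    have hμ0 : ∀ i, 0 ≤ μ i := fun i => (hA.add hB).eigenvalues_nonneg i
    have hα0 : ∀ i, 0 ≤ α i := fun i => hA.eigenvalues_nonneg i
    have hβ0 : ∀ i, 0 ≤ β i := fun i => hB.eigenvalues_nonneg i
    set S : ℝ := ∑ i, μ i ^ q with hSdef
    set SA : ℝ := ∑ i, α i ^ q with hSAdef
    set SB : ℝ := ∑ i, β i ^ q with hSBdef
    have hS0 : 0 ≤ S := Finset.sum_nonneg fun i _ => Real.rpow_nonneg (hμ0 i) _
    have hSA0 : 0 ≤ SA := Finset.sum_nonneg fun i _ => Real.rpow_nonneg (hα0 i) _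
    have hSB0 : 0 ≤ SB := Finset.sum_nonneg fun i _ => Real.rpow_nonneg (hβ0 i) _
    rcases eq_or_lt_of_le hS0 with hS | hS
    · rw [← hS, Real.zero_rpow (by positivity : (1:ℝ)/q ≠ 0)]
      positivity
    -- the dual element
    set ν : n → ℝ := fun i => μ i ^ (q - 1) with hνdef
    have hν0 : ∀ i, 0 ≤ ν i := fun i => Real.rpow_nonneg (hμ0 i) _
    have hνsum : ∑ j, ν j ^ q' = S := by
      refine Finset.sum_congr rfl fun j _ => ?_
      rw [hνdef, ← Real.rpow_mul (hμ0 j), hq'.sub_one_mul_conj]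
    have hcast : (RCLike.ofReal : ℝ → ℂ) = Complex.ofReal := rfl
    set U : Matrix n n ℂ := ((hA.add hB).1.eigenvectorUnitary : Matrix n n ℂ) with hUdef
    have hU : U ∈ Matrix.unitaryGroup n ℂ := ((hA.add hB).1.eigenvectorUnitary).2
    set Y : Matrix n n ℂ := U * Matrix.diagonal (Complex.ofReal ∘ ν) * star U with hYdef
    -- trace of (A+B) * Y equals S
    have t1 : Matrix.trace ((A + B) * Y) = (S : ℂ) := by
      conv_lhs => rw [(hA.add hB).1.spectral_theorem, Unitary.conjStarAlgAut_apply]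
      rw [hcast, hYdef, trace_prod_eq U U hU μ ν, Matrix.mem_unitaryGroup_iff'.mp hU]
      norm_cast
      rw [hSdef]
      refine Finset.sum_congr rfl fun i _ => ?_
      have : ∀ j, μ i * ν j * Complex.normSq ((1 : Matrix n n ℂ) i j)
          = if i = j then μ i * ν i else 0 := by
        intro j
        by_cases h : i = j
        · subst h; simp [Matrix.one_apply_eq]
        · simp [Matrix.one_apply_ne h, h]
      rw [Finset.sum_congr rfl fun j _ => this j, Finset.sum_ite_eq Finset.univ i
        (fun _ => μ i * ν i)]
      simp only [Finset.mem_univ, if_true]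
      rcases eq_or_lt_of_le (hμ0 i) with h0 | h0
      · rw [← h0, Real.zero_rpow (by positivity : q ≠ 0), zero_mul]
      · have hνi : μ i * ν i = μ i ^ (1:ℝ) * μ i ^ (q - 1) := by
          rw [Real.rpow_one]
        rw [hνi, ← Real.rpow_add h0]
        congr 1
        ring
    -- Hölder bounds for A and B against Y
    have holder : ∀ (D : Matrix n n ℂ) (hD : D.PosSemidef),
        (∀ i, 0 ≤ hD.1.eigenvalues i) →
        ∃ r : ℝ, Matrix.trace (D * Y) = (r : ℂ) ∧
          r ≤ (∑ i, hD.1.eigenvalues i ^ q) ^ (1/q) * S ^ (1/q') := by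
      intro D hD hD0
      set V : Matrix n n ℂ := (hD.1.eigenvectorUnitary : Matrix n n ℂ) with hVdef
      have hV : V ∈ Matrix.unitaryGroup n ℂ := (hD.1.eigenvectorUnitary).2
      set M : Matrix n n ℂ := star V * U with hMdef
      have hM : M ∈ Matrix.unitaryGroup n ℂ := by
        rw [Matrix.mem_unitaryGroup_iff]
        rw [hMdef, Matrix.star_mul, star_star, Matrix.mul_assoc, ← Matrix.mul_assoc U,
          Matrix.mem_unitaryGroup_iff.mp hU, Matrix.one_mul,
          Matrix.mem_unitaryGroup_iff'.mp hV]
      refine ⟨∑ i, ∑ j, hD.1.eigenvalues i * ν j * Complex.normSq (M i j), ?_, ?_⟩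
      · conv_lhs => rw [hD.1.spectral_theorem, Unitary.conjStarAlgAut_apply]
        rw [hcast, hYdef, trace_prod_eq V U hV _ ν]
      · calc ∑ i, ∑ j, hD.1.eigenvalues i * ν j * Complex.normSq (M i j)
            ≤ (∑ i, hD.1.eigenvalues i ^ q) ^ (1/q) * (∑ j, ν j ^ q') ^ (1/q') :=
              double_sum_holder hq' (fun i j => Complex.normSq (M i j))
                (fun i j => Complex.normSq_nonneg _) (unitary_row_sum hM) (unitary_col_sum hM)
                _ ν hD0 hν0
          _ = (∑ i, hD.1.eigenvalues i ^ q) ^ (1/q) * S ^ (1/q') := by rw [hνsum]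
    obtain ⟨rA, hrA, hrA2⟩ := holder A hA hα0
    obtain ⟨rB, hrB, hrB2⟩ := holder B hB hβ0
    -- combine
    have tsum : (S : ℂ) = (rA : ℂ) + (rB : ℂ) := by
      rw [← t1, Matrix.add_mul, Matrix.trace_add, hrA, hrB]
    have tsumR : S = rA + rB := by exact_mod_cast tsum
    have key : S ≤ (SA ^ (1/q) + SB ^ (1/q)) * S ^ (1/q') := by
      rw [add_mul]
      calc S = rA + rB := tsumR
        _ ≤ _ := add_le_add hrA2 hrB2
    have hfact : S ^ (1/q) * S ^ (1/q') = S := by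
      rw [← Real.rpow_add hS, hsum, Real.rpow_one]
    have hSq' : 0 < S ^ (1/q') := Real.rpow_pos_of_pos hS _
    exact le_of_mul_le_mul_right (by rw [hfact]; exact key) hSq'

end Aux

/-- The square root of a positive semidefinite matrix (removed from Mathlib; restored with
its old definition). -/
noncomputable def Matrix.PosSemidef.sqrt {n : Type*} [Fintype n] [DecidableEq n] {𝕜 : Type*}
    [RCLike 𝕜] {A : Matrix n n 𝕜} (hA : Matrix.PosSemidef A) : Matrix n n 𝕜 :=
  hA.1.eigenvectorUnitary.1 * Matrix.diagonal ((↑) ∘ (√·) ∘ hA.1.eigenvalues) *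
    (star hA.1.eigenvectorUnitary : Matrix n n 𝕜)

/-- The Schatten `p`-norm of a `k × k` complex matrix, `‖a‖_p = (tr |a|^p)^(1/p)`,
computed via the eigenvalues of `aᴴ a` (whose `p/2`-powers are the `p`-th powers
of the singular values of `a`). -/
noncomputable def schattenNorm {k : ℕ} (p : ℝ) (a : Matrix (Fin k) (Fin k) ℂ) : ℝ :=
  (∑ i, ((Matrix.isHermitian_conjTranspose_mul_self a).eigenvalues i) ^ (p / 2)) ^ (1 / p)

/-- If `p ≥ 2` then `‖(d₁* d₁ + d₂* d₂)^(1/2)‖_p ≤ (‖d₁‖_p² + ‖d₂‖_p²)^(1/2)`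
for `p`-Schatten-class operators (here: matrices). -/
theorem schattenNorm_sqrt_add_le {k : ℕ} (p : ℝ) (hp : 2 ≤ p)
    (d₁ d₂ : Matrix (Fin k) (Fin k) ℂ) :
    schattenNorm p
        (((Matrix.posSemidef_conjTranspose_mul_self d₁).add
          (Matrix.posSemidef_conjTranspose_mul_self d₂)).sqrt) ≤
      Real.sqrt (schattenNorm p d₁ ^ 2 + schattenNorm p d₂ ^ 2) := by
  have hp0 : 0 < p := lt_of_lt_of_le two_pos hp
  have hq1 : (1:ℝ) ≤ p / 2 := by linarith
  set hA := Matrix.posSemidef_conjTranspose_mul_self d₁ with hAdef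
  set hB := Matrix.posSemidef_conjTranspose_mul_self d₂ with hBdef
  have hmat : ((hA.add hB).sqrt)ᴴ * (hA.add hB).sqrt = d₁ᴴ * d₁ + d₂ᴴ * d₂ := by
    have hUU := Matrix.mem_unitaryGroup_iff'.mp (hA.add hB).1.eigenvectorUnitary.2
    have hDD : Matrix.diagonal ((RCLike.ofReal : ℝ → ℂ) ∘ (√·) ∘ (hA.add hB).1.eigenvalues) *
        Matrix.diagonal ((RCLike.ofReal : ℝ → ℂ) ∘ (√·) ∘ (hA.add hB).1.eigenvalues) =
        Matrix.diagonal ((RCLike.ofReal : ℝ → ℂ) ∘ (hA.add hB).1.eigenvalues) := by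
      rw [Matrix.diagonal_mul_diagonal]
      congr 1
      funext i
      simp only [Function.comp_apply]
      rw [← RCLike.ofReal_mul, Real.mul_self_sqrt ((hA.add hB).eigenvalues_nonneg i)]
    have hDs : (Matrix.diagonal ((RCLike.ofReal : ℝ → ℂ) ∘ (√·) ∘ (hA.add hB).1.eigenvalues))ᴴ =
        Matrix.diagonal ((RCLike.ofReal : ℝ → ℂ) ∘ (√·) ∘ (hA.add hB).1.eigenvalues) := by
      rw [Matrix.diagonal_conjTranspose]
      congr 1
      funext i
      simp
    conv_rhs => rw [(hA.add hB).1.spectral_theorem, Unitary.conjStarAlgAut_apply]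
    unfold Matrix.PosSemidef.sqrt
    simp only [Matrix.conjTranspose_mul, hDs, Matrix.star_eq_conjTranspose,
      Matrix.conjTranspose_conjTranspose, Matrix.mul_assoc] at hUU ⊢
    rw [← Matrix.mul_assoc (Matrix.conjTranspose _) _ _, hUU, Matrix.one_mul,
      ← Matrix.mul_assoc _ _ (Matrix.conjTranspose _), hDD]
  have eigeq : ∀ (M N : Matrix (Fin k) (Fin k) ℂ) (h1 : M.IsHermitian) (h2 : N.IsHermitian),
      M = N → h1.eigenvalues = h2.eigenvalues := by rintro M N h1 h2 rfl; rfl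
  have h1 : (Matrix.isHermitian_conjTranspose_mul_self ((hA.add hB).sqrt)).eigenvalues
      = (hA.add hB).1.eigenvalues := eigeq _ _ _ _ hmat
  have h2 : (Matrix.isHermitian_conjTranspose_mul_self d₁).eigenvalues = hA.1.eigenvalues := rfl
  have h3 : (Matrix.isHermitian_conjTranspose_mul_self d₂).eigenvalues = hB.1.eigenvalues := rfl
  simp only [schattenNorm, h1, h2, h3]
  set L : ℝ := ∑ i, (hA.add hB).1.eigenvalues i ^ (p/2) with hLdef
  set SA : ℝ := ∑ i, hA.1.eigenvalues i ^ (p/2) with hSAdef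
  set SB : ℝ := ∑ i, hB.1.eigenvalues i ^ (p/2) with hSBdef
  have hL0 : 0 ≤ L := Finset.sum_nonneg fun i _ =>
    Real.rpow_nonneg ((hA.add hB).eigenvalues_nonneg i) _
  have hSA0 : 0 ≤ SA := Finset.sum_nonneg fun i _ =>
    Real.rpow_nonneg (hA.eigenvalues_nonneg i) _
  have hSB0 : 0 ≤ SB := Finset.sum_nonneg fun i _ =>
    Real.rpow_nonneg (hB.eigenvalues_nonneg i) _
  have core := core_triangle hA hB hq1
  rw [show 1/(p/2) = 2/p from one_div_div p 2] at core
  have e1 : L ^ (1/p) = (L ^ (2/p)) ^ ((1:ℝ)/2) := by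
    rw [← Real.rpow_mul hL0]
    congr 1
    field_simp
  have e2 : ∀ (S : ℝ), 0 ≤ S → (S ^ ((1:ℝ)/p)) ^ (2:ℕ) = S ^ (2/p) := by
    intro S hS
    rw [← Real.rpow_natCast (S ^ ((1:ℝ)/p)) 2, ← Real.rpow_mul hS]
    congr 1
    push_cast
    ring
  rw [e1, e2 SA hSA0, e2 SB hSB0, Real.sqrt_eq_rpow]
  exact Real.rpow_le_rpow (Real.rpow_nonneg hL0 _) core (by norm_num)
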